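/- Let w_{ijk}, for i,j ∈ {0,1} and k ∈ {0,1,2}, be twelve nonzero complex numbers. For 0 ≤ k < l ≤ 2 set a_{kl} = w_{00k}w_{10l} − w_{10k}w_{00l}, c_{kl} = w_{01k}w_{11l} − w_{11k}w_{01l}, and b_{kl} = w_{00k}w_{11l} + w_{01k}w_{10l} − w_{10k}w_{01l} − w_{11k}w_{00l}. Let W̃ be the 3×3 complex matrix with rows (a_{01}, b_{01}, c_{01}), (a_{02}, b_{02}, c_{02}), (a_{12}, b_{12}, c_{12}), and let B be the 3×4 complex matrix whose k-th row is (w_{00k}, w_{01k}, w_{10k}, w_{11k}) for k = 0,1,2. Then W̃ has rank at most 1 if and only if B has rank at most 2 (equivalently, all 2×2 minors of W̃ vanish if and only if all 3×3 minors of B vanish). -/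

import Mathlib

open Submodule Module

lemma range_pair_le {V : Type*} [AddCommGroup V] [Module ℂ V] (u v : V) :
    finrank ℂ (span ℂ ({u, v} : Set V)) ≤ 2 := by
  have h := finrank_range_le_card (R := ℂ) ![u, v]
  have hr : Set.range ![u, v] = {u, v} := by
    ext w; simp [Fin.exists_fin_two]; tauto
  rw [hr] at h
  simpa [Set.finrank] using h

lemma range_single_le {V : Type*} [AddCommGroup V] [Module ℂ V] (u : V) :
    finrank ℂ (span ℂ ({u} : Set V)) ≤ 1 := by
  have h := finrank_range_le_card (R := ℂ) ![u]
  have hr : Set.range ![u] = {u} := by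
    ext w; simp [Fin.exists_fin_one]
  rw [hr] at h
  simpa [Set.finrank] using h

lemma mem_span_pair' (u v w : Fin 4 → ℂ) (c s t' : ℂ) (hc : c ≠ 0)
    (h : ∀ j, c * w j + s * u j + t' * v j = 0) :
    w ∈ span ℂ ({u, v} : Set (Fin 4 → ℂ)) := by
  have hw : w = (-(s / c)) • u + (-(t' / c)) • v := by
    funext j
    have hj := h j
    simp only [Pi.add_apply, Pi.smul_apply, smul_eq_mul]
    have h2 : w j = (-(s * u j) - t' * v j) / c := by
      rw [eq_div_iff hc]; linear_combination hj
    rw [h2]; ring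
  rw [hw]
  exact add_mem (smul_mem _ _ (subset_span (by simp))) (smul_mem _ _ (subset_span (by simp)))

lemma rank3_le_two_iff (A : Matrix (Fin 3) (Fin 4) ℂ) :
    A.rank ≤ 2 ↔ ∃ g : Fin 3 → ℂ, g ≠ 0 ∧
      ∀ j, g 0 * A 0 j + g 1 * A 1 j + g 2 * A 2 j = 0 := by
  rw [Matrix.rank_eq_finrank_span_row]
  constructor
  · intro h
    by_contra hne
    push_neg at hne
    have hLI : LinearIndependent ℂ A.row := by
      rw [Fintype.linearIndependent_iff]
      intro g hsum
      by_contra hg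
      have hgne : g ≠ 0 := by
        intro h0; apply hg; intro i; rw [h0]; rfl
      obtain ⟨j, hj⟩ := hne g hgne
      apply hj
      have := congrFun hsum j
      simpa [Fin.sum_univ_three, Matrix.row_apply] using this
    have := finrank_span_eq_card hLI
    rw [this] at h
    simp at h
  · rintro ⟨g, hg, hrel⟩
    have hex : ∃ k, g k ≠ 0 := by
      by_contra hc
      push_neg at hc
      exact hg (funext hc)
    obtain ⟨k, hk⟩ := hex
    fin_cases k
    · refine le_trans (finrank_mono (span_le.2 ?_)) (range_pair_le (A 1) (A 2))
      rintro _ ⟨i, rfl⟩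
      fin_cases i
      · exact mem_span_pair' (A 1) (A 2) (A 0) (g 0) (g 1) (g 2) hk
          (fun j => by linear_combination hrel j)
      · exact subset_span (by simp [Matrix.row_apply'])
      · exact subset_span (by simp [Matrix.row_apply'])
    · refine le_trans (finrank_mono (span_le.2 ?_)) (range_pair_le (A 0) (A 2))
      rintro _ ⟨i, rfl⟩
      fin_cases i
      · exact subset_span (by simp [Matrix.row_apply'])
      · exact mem_span_pair' (A 0) (A 2) (A 1) (g 1) (g 0) (g 2) hk
          (fun j => by linear_combination hrel j)
      · exact subset_span (by simp [Matrix.row_apply'])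
    · refine le_trans (finrank_mono (span_le.2 ?_)) (range_pair_le (A 0) (A 1))
      rintro _ ⟨i, rfl⟩
      fin_cases i
      · exact subset_span (by simp [Matrix.row_apply'])
      · exact subset_span (by simp [Matrix.row_apply'])
      · exact mem_span_pair' (A 0) (A 1) (A 2) (g 2) (g 0) (g 1) hk
          (fun j => by linear_combination hrel j)


lemma rank3_le_one (A : Matrix (Fin 3) (Fin 3) ℂ) (v : Fin 3 → ℂ) (c : ℂ) (hc : c ≠ 0)
    (h : ∀ i, ∃ s, ∀ k, c * A i k = s * v k) : A.rank ≤ 1 := by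
  rw [Matrix.rank_eq_finrank_span_row]
  have hsub : Set.range A ⊆ (span ℂ ({v} : Set (Fin 3 → ℂ)) : Set _) := by
    rintro _ ⟨i, rfl⟩
    obtain ⟨s, hs⟩ := h i
    have : A i = (s / c) • v := by
      funext k
      have h2 : A i k = s * v k / c := by rw [eq_div_iff hc]; linear_combination hs k
      rw [h2]; simp only [Pi.smul_apply, smul_eq_mul]; ring
    rw [this]
    exact smul_mem _ _ (subset_span rfl)
  exact le_trans (finrank_mono (span_le.2 hsub)) (range_single_le v)

lemma minors_of_rank3_le_one (A : Matrix (Fin 3) (Fin 3) ℂ) (h : A.rank ≤ 1) :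
    ∀ i j k l, A i k * A j l = A i l * A j k := by
  intro i j k l
  have hnli : ¬ LinearIndependent ℂ ![A i, A j] := by
    intro hli
    have h1 : finrank ℂ (span ℂ (Set.range ![A i, A j])) = 2 := by
      simpa using finrank_span_eq_card hli
    have h2 : span ℂ (Set.range ![A i, A j]) ≤ span ℂ (Set.range A) := by
      apply span_le.2
      rintro _ ⟨m, rfl⟩
      fin_cases m
      · exact subset_span ⟨i, rfl⟩
      · exact subset_span ⟨j, rfl⟩
    have h3 := finrank_mono h2
    rw [h1] at h3
    rw [Matrix.rank_eq_finrank_span_row] at h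
    exact absurd (le_trans h3 h) (by norm_num)
  obtain ⟨g, hsum, m, hm⟩ := Fintype.not_linearIndependent_iff.mp hnli
  have hcomp : ∀ p, g 0 * A i p + g 1 * A j p = 0 := by
    intro p
    have := congrFun hsum p
    simpa [Fin.sum_univ_two] using this
  fin_cases m
  · have hz : (A i k * A j l - A i l * A j k) * g 0 = 0 := by
      linear_combination A j l * hcomp k - A j k * hcomp l
    have := (mul_eq_zero.mp hz).resolve_right hm
    linear_combination this
  · have hz : (A i k * A j l - A i l * A j k) * g 1 = 0 := by
      linear_combination A i k * hcomp l - A i l * hcomp k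
    have := (mul_eq_zero.mp hz).resolve_right hm
    linear_combination this

theorem stmt_13 (w : Fin 2 → Fin 2 → Fin 3 → ℂ)
    (hw : ∀ i j k, w i j k ≠ 0)
    (a c b : Fin 3 → Fin 3 → ℂ)
    (ha : ∀ k l, a k l = w 0 0 k * w 1 0 l - w 1 0 k * w 0 0 l)
    (hc : ∀ k l, c k l = w 0 1 k * w 1 1 l - w 1 1 k * w 0 1 l)
    (hb : ∀ k l, b k l = w 0 0 k * w 1 1 l + w 0 1 k * w 1 0 l
      - w 1 0 k * w 0 1 l - w 1 1 k * w 0 0 l)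
    (Wt : Matrix (Fin 3) (Fin 3) ℂ)
    (hWt : Wt = !![a 0 1, b 0 1, c 0 1; a 0 2, b 0 2, c 0 2; a 1 2, b 1 2, c 1 2])
    (B : Matrix (Fin 3) (Fin 4) ℂ)
    (hB : B = !![w 0 0 0, w 0 1 0, w 1 0 0, w 1 1 0;
                 w 0 0 1, w 0 1 1, w 1 0 1, w 1 1 1;
                 w 0 0 2, w 0 1 2, w 1 0 2, w 1 1 2]) :
    Wt.rank ≤ 1 ↔ B.rank ≤ 2 := by
  subst hWt hB
  constructor
  · intro h1
    have M := minors_of_rank3_le_one _ h1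
    have E10 := M 0 1 0 1
    simp [ha, hb, hc] at E10
    have E11 := M 0 2 0 1
    simp [ha, hb, hc] at E11
    have E12 := M 1 2 0 1
    simp [ha, hb, hc] at E12
    have E30 := M 0 1 1 2
    simp [ha, hb, hc] at E30
    have E31 := M 0 2 1 2
    simp [ha, hb, hc] at E31
    have E32 := M 1 2 1 2
    simp [ha, hb, hc] at E32
    have hD3 : (w 0 0 0) * ((w 1 0 1) * (w 1 1 2) - (w 1 0 2) * (w 1 1 1)) - (w 1 0 0) * ((w 0 0 1) * (w 1 1 2) - (w 0 0 2) * (w 1 1 1)) + (w 1 1 0) * ((w 0 0 1) * (w 1 0 2) - (w 0 0 2) * (w 1 0 1)) = 0 := by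
      have key : ((w 0 0 0) * ((w 1 0 1) * (w 1 1 2) - (w 1 0 2) * (w 1 1 1)) - (w 1 0 0) * ((w 0 0 1) * (w 1 1 2) - (w 0 0 2) * (w 1 1 1)) + (w 1 1 0) * ((w 0 0 1) * (w 1 0 2) - (w 0 0 2) * (w 1 0 1))) * ((w 0 0 0) * ((w 1 0 1) * (w 1 1 2) - (w 1 0 2) * (w 1 1 1)) - (w 1 0 0) * ((w 0 0 1) * (w 1 1 2) - (w 0 0 2) * (w 1 1 1)) + (w 1 1 0) * ((w 0 0 1) * (w 1 0 2) - (w 0 0 2) * (w 1 0 1))) = 0 := by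
        linear_combination ((w 1 0 1) * (w 1 1 2) - (w 1 0 2) * (w 1 1 1)) * E10 + (-((w 1 0 0) * (w 1 1 2) - (w 1 0 2) * (w 1 1 0))) * E11 + ((w 1 0 0) * (w 1 1 1) - (w 1 0 1) * (w 1 1 0)) * E12
      exact mul_self_eq_zero.mp key
    have hD4 : (w 0 1 0) * ((w 1 0 1) * (w 1 1 2) - (w 1 0 2) * (w 1 1 1)) - (w 1 0 0) * ((w 0 1 1) * (w 1 1 2) - (w 0 1 2) * (w 1 1 1)) + (w 1 1 0) * ((w 0 1 1) * (w 1 0 2) - (w 0 1 2) * (w 1 0 1)) = 0 := by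
      have key : ((w 0 1 0) * ((w 1 0 1) * (w 1 1 2) - (w 1 0 2) * (w 1 1 1)) - (w 1 0 0) * ((w 0 1 1) * (w 1 1 2) - (w 0 1 2) * (w 1 1 1)) + (w 1 1 0) * ((w 0 1 1) * (w 1 0 2) - (w 0 1 2) * (w 1 0 1))) * ((w 0 1 0) * ((w 1 0 1) * (w 1 1 2) - (w 1 0 2) * (w 1 1 1)) - (w 1 0 0) * ((w 0 1 1) * (w 1 1 2) - (w 0 1 2) * (w 1 1 1)) + (w 1 1 0) * ((w 0 1 1) * (w 1 0 2) - (w 0 1 2) * (w 1 0 1))) = 0 := by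
        linear_combination ((w 1 0 1) * (w 1 1 2) - (w 1 0 2) * (w 1 1 1)) * E30 + (-((w 1 0 0) * (w 1 1 2) - (w 1 0 2) * (w 1 1 0))) * E31 + ((w 1 0 0) * (w 1 1 1) - (w 1 0 1) * (w 1 1 0)) * E32
      exact mul_self_eq_zero.mp key
    have hD1 : (w 0 0 0) * ((w 0 1 1) * (w 1 0 2) - (w 0 1 2) * (w 1 0 1)) - (w 0 1 0) * ((w 0 0 1) * (w 1 0 2) - (w 0 0 2) * (w 1 0 1)) + (w 1 0 0) * ((w 0 0 1) * (w 0 1 2) - (w 0 0 2) * (w 0 1 1)) = 0 := by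
      have key : ((w 0 0 0) * ((w 0 1 1) * (w 1 0 2) - (w 0 1 2) * (w 1 0 1)) - (w 0 1 0) * ((w 0 0 1) * (w 1 0 2) - (w 0 0 2) * (w 1 0 1)) + (w 1 0 0) * ((w 0 0 1) * (w 0 1 2) - (w 0 0 2) * (w 0 1 1))) * w 1 0 0 = 0 := by
        linear_combination E10 - (w 0 0 0) * hD3
      exact (mul_eq_zero.mp key).resolve_right (hw 1 0 0)
    have hD2 : (w 0 0 0) * ((w 0 1 1) * (w 1 1 2) - (w 0 1 2) * (w 1 1 1)) - (w 0 1 0) * ((w 0 0 1) * (w 1 1 2) - (w 0 0 2) * (w 1 1 1)) + (w 1 1 0) * ((w 0 0 1) * (w 0 1 2) - (w 0 0 2) * (w 0 1 1)) = 0 := by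
      have key : ((w 0 0 0) * ((w 0 1 1) * (w 1 1 2) - (w 0 1 2) * (w 1 1 1)) - (w 0 1 0) * ((w 0 0 1) * (w 1 1 2) - (w 0 0 2) * (w 1 1 1)) + (w 1 1 0) * ((w 0 0 1) * (w 0 1 2) - (w 0 0 2) * (w 0 1 1))) * w 1 1 0 = 0 := by
        linear_combination E30 - (w 0 1 0) * hD4
      exact (mul_eq_zero.mp key).resolve_right (hw 1 1 0)
    by_cases hu : (w 0 0 0 * w 0 1 1 - w 0 0 1 * w 0 1 0 = 0) ∧ (w 0 0 0 * w 0 1 2 - w 0 0 2 * w 0 1 0 = 0) ∧ (w 0 0 1 * w 0 1 2 - w 0 0 2 * w 0 1 1 = 0)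
    case neg =>
      refine (rank3_le_two_iff _).mpr ⟨![w 0 0 1 * w 0 1 2 - w 0 0 2 * w 0 1 1, -(w 0 0 0 * w 0 1 2 - w 0 0 2 * w 0 1 0), w 0 0 0 * w 0 1 1 - w 0 0 1 * w 0 1 0], ?_, ?_⟩
      · intro h0
        refine hu ⟨?_, ?_, ?_⟩
        · simpa using congrFun h0 2
        · have h' := congrFun h0 1
          simp at h'
          linear_combination -h'
        · simpa using congrFun h0 0
      · intro j; fin_cases j
        · simp; all_goals ring
        · simp; all_goals ring
        · simp
          all_goals linear_combination hD1
        · simp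
          all_goals linear_combination hD2
    case pos =>
      obtain ⟨hu1, hu2, hu3⟩ := hu
      by_cases hv : (w 0 0 0 * w 1 0 1 - w 0 0 1 * w 1 0 0 = 0) ∧ (w 0 0 0 * w 1 0 2 - w 0 0 2 * w 1 0 0 = 0) ∧ (w 0 0 1 * w 1 0 2 - w 0 0 2 * w 1 0 1 = 0)
      case neg =>
        refine (rank3_le_two_iff _).mpr ⟨![w 0 0 1 * w 1 0 2 - w 0 0 2 * w 1 0 1, -(w 0 0 0 * w 1 0 2 - w 0 0 2 * w 1 0 0), w 0 0 0 * w 1 0 1 - w 0 0 1 * w 1 0 0], ?_, ?_⟩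
        · intro h0
          refine hv ⟨?_, ?_, ?_⟩
          · simpa using congrFun h0 2
          · have h' := congrFun h0 1
            simp at h'
            linear_combination -h'
          · simpa using congrFun h0 0
        · intro j; fin_cases j
          · simp; all_goals ring
          · simp
            all_goals linear_combination -hD1
          · simp; all_goals ring
          · simp
            all_goals linear_combination hD3
      case pos =>
        obtain ⟨hv1, hv2, hv3⟩ := hv
        by_cases hq : (w 0 0 0 * w 1 1 1 - w 0 0 1 * w 1 1 0 = 0) ∧ (w 0 0 0 * w 1 1 2 - w 0 0 2 * w 1 1 0 = 0) ∧ (w 0 0 1 * w 1 1 2 - w 0 0 2 * w 1 1 1 = 0)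
        case neg =>
          refine (rank3_le_two_iff _).mpr ⟨![w 0 0 1 * w 1 1 2 - w 0 0 2 * w 1 1 1, -(w 0 0 0 * w 1 1 2 - w 0 0 2 * w 1 1 0), w 0 0 0 * w 1 1 1 - w 0 0 1 * w 1 1 0], ?_, ?_⟩
          · intro h0
            refine hq ⟨?_, ?_, ?_⟩
            · simpa using congrFun h0 2
            · have h' := congrFun h0 1
              simp at h'
              linear_combination -h'
            · simpa using congrFun h0 0
          · intro j; fin_cases j
            · simp; all_goals ring
            · simp
              all_goals linear_combination -hD2
            · simp
              all_goals linear_combination -hD3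
            · simp; all_goals ring
        case pos =>
          obtain ⟨hq1, hq2, hq3⟩ := hq
          refine (rank3_le_two_iff _).mpr ⟨![w 0 0 1, -(w 0 0 0), 0], ?_, ?_⟩
          · intro h0
            apply hw 0 0 0
            simpa using congrFun h0 1
          · intro j; fin_cases j
            · simp; all_goals ring
            · simp
              all_goals linear_combination -hu1
            · simp
              all_goals linear_combination -hv1
            · simp
              all_goals linear_combination -hq1
  · intro h2
    obtain ⟨g, hg, hrel⟩ := (rank3_le_two_iff _).mp h2
    have hx := hrel 0
    simp at hx
    have hy := hrel 1
    simp at hy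
    have hz := hrel 2
    simp at hz
    have ht := hrel 3
    simp at ht
    obtain ⟨k, hk⟩ : ∃ k, g k ≠ 0 := by
      by_contra hcon; push_neg at hcon; exact hg (funext hcon)
    fin_cases k
    · apply rank3_le_one _ ![a 1 2, b 1 2, c 1 2] (g 0) hk
      intro i; fin_cases i
      · refine ⟨g 2, fun k => ?_⟩
        fin_cases k
        · simp [ha, hb, hc]
          all_goals linear_combination -((w 0 0 1) * hz - (w 1 0 1) * hx)
        · simp [ha, hb, hc]
          all_goals linear_combination -((w 0 0 1) * ht + (w 0 1 1) * hz - (w 1 0 1) * hy - (w 1 1 1) * hx)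
        · simp [ha, hb, hc]
          all_goals linear_combination -((w 0 1 1) * ht - (w 1 1 1) * hy)
      · refine ⟨-g 1, fun k => ?_⟩
        fin_cases k
        · simp [ha, hb, hc]
          all_goals linear_combination -((w 0 0 2) * hz - (w 1 0 2) * hx)
        · simp [ha, hb, hc]
          all_goals linear_combination -((w 0 0 2) * ht + (w 0 1 2) * hz - (w 1 0 2) * hy - (w 1 1 2) * hx)
        · simp [ha, hb, hc]
          all_goals linear_combination -((w 0 1 2) * ht - (w 1 1 2) * hy)
      · refine ⟨g 0, fun k => ?_⟩
        fin_cases k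
        · simp [ha, hb, hc]
          all_goals ring
        · simp [ha, hb, hc]
          all_goals ring
        · simp [ha, hb, hc]
          all_goals ring
    · apply rank3_le_one _ ![a 0 2, b 0 2, c 0 2] (g 1) hk
      intro i; fin_cases i
      · refine ⟨-g 2, fun k => ?_⟩
        fin_cases k
        · simp [ha, hb, hc]
          all_goals linear_combination ((w 0 0 0) * hz - (w 1 0 0) * hx)
        · simp [ha, hb, hc]
          all_goals linear_combination ((w 0 0 0) * ht + (w 0 1 0) * hz - (w 1 0 0) * hy - (w 1 1 0) * hx)
        · simp [ha, hb, hc]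
          all_goals linear_combination ((w 0 1 0) * ht - (w 1 1 0) * hy)
      · refine ⟨g 1, fun k => ?_⟩
        fin_cases k
        · simp [ha, hb, hc]
          all_goals ring
        · simp [ha, hb, hc]
          all_goals ring
        · simp [ha, hb, hc]
          all_goals ring
      · refine ⟨-g 0, fun k => ?_⟩
        fin_cases k
        · simp [ha, hb, hc]
          all_goals linear_combination -((w 0 0 2) * hz - (w 1 0 2) * hx)
        · simp [ha, hb, hc]
          all_goals linear_combination -((w 0 0 2) * ht + (w 0 1 2) * hz - (w 1 0 2) * hy - (w 1 1 2) * hx)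
        · simp [ha, hb, hc]
          all_goals linear_combination -((w 0 1 2) * ht - (w 1 1 2) * hy)
    · apply rank3_le_one _ ![a 0 1, b 0 1, c 0 1] (g 2) hk
      intro i; fin_cases i
      · refine ⟨g 2, fun k => ?_⟩
        fin_cases k
        · simp [ha, hb, hc]
          all_goals ring
        · simp [ha, hb, hc]
          all_goals ring
        · simp [ha, hb, hc]
          all_goals ring
      · refine ⟨-g 1, fun k => ?_⟩
        fin_cases k
        · simp [ha, hb, hc]
          all_goals linear_combination ((w 0 0 0) * hz - (w 1 0 0) * hx)
        · simp [ha, hb, hc]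
          all_goals linear_combination ((w 0 0 0) * ht + (w 0 1 0) * hz - (w 1 0 0) * hy - (w 1 1 0) * hx)
        · simp [ha, hb, hc]
          all_goals linear_combination ((w 0 1 0) * ht - (w 1 1 0) * hy)
      · refine ⟨g 0, fun k => ?_⟩
        fin_cases k
        · simp [ha, hb, hc]
          all_goals linear_combination ((w 0 0 1) * hz - (w 1 0 1) * hx)
        · simp [ha, hb, hc]
          all_goals linear_combination ((w 0 0 1) * ht + (w 0 1 1) * hz - (w 1 0 1) * hy - (w 1 1 1) * hx)
        · simp [ha, hb, hc]
          all_goals linear_combination ((w 0 1 1) * ht - (w 1 1 1) * hy)
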